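/- A set B ⊆ V is a basis (inclusion-maximal independent set) of the matroid M = (V, ℐ) if and only if |B| = k and α_i ≤ |B ∩ χ⁻¹(i)| ≤ β_i for every color i. -/
import Mathlib


open Finset

variable {V : Type*} [DecidableEq V] [Fintype V]

/-- Number of vertices of color `i` in `X`. -/
def colorCount {c : ℕ} (χ : V → Fin c) (X : Finset V) (i : Fin c) : ℕ :=
  (X.filter (fun v => χ v = i)).card

/-- The family ℐ of independent sets: color upper bounds hold and there is
still room to satisfy all lower bounds within `k` elements
(`α i - colorCount χ X i` is truncated subtraction, i.e. `max 0 (α i - |X ∩ χ⁻¹ i|)`). -/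
def FairIndep {c : ℕ} (χ : V → Fin c) (α β : Fin c → ℕ) (k : ℕ) (X : Finset V) : Prop :=
  (∀ i, colorCount χ X i ≤ β i) ∧
    X.card + ∑ i, (α i - colorCount χ X i) ≤ k

lemma sum_colorCount {c : ℕ} (χ : V → Fin c) (B : Finset V) :
    ∑ i, colorCount χ B i = B.card := by
  exact (Finset.card_eq_sum_card_fiberwise (fun x _ => Finset.mem_univ (χ x))).symm

lemma colorCount_insert {c : ℕ} (χ : V → Fin c) {B : Finset V} {v : V} (hv : v ∉ B) (i : Fin c) :
    colorCount χ (insert v B) i = colorCount χ B i + (if χ v = i then 1 else 0) := by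
  unfold colorCount
  rw [Finset.filter_insert]
  by_cases h : χ v = i
  · rw [if_pos h, Finset.card_insert_of_notMem (fun h2 => hv (Finset.mem_filter.1 h2).1),
      if_pos h]
  · rw [if_neg h, if_neg h]
    simp

lemma exists_new_vertex {c : ℕ} (χ : V → Fin c) {B : Finset V} {i : Fin c}
    (h : colorCount χ B i < colorCount χ (Finset.univ : Finset V) i) :
    ∃ v, v ∉ B ∧ χ v = i := by
  obtain ⟨v, hv, hv'⟩ := Finset.exists_of_ssubset
    ⟨Finset.filter_subset_filter _ (Finset.subset_univ B),
     fun h2 => absurd (Finset.card_le_card h2) h.not_ge⟩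
  refine ⟨v, fun hvB => hv' (Finset.mem_filter.2 ⟨hvB, (Finset.mem_filter.1 hv).2⟩),
    (Finset.mem_filter.1 hv).2⟩

theorem fairIndep_basis_iff {c : ℕ} (χ : V → Fin c) (α β : Fin c → ℕ) (k : ℕ)
    (hαβ : ∀ i, α i ≤ β i) (hk1 : ∑ i, α i ≤ k) (hk2 : k ≤ ∑ i, β i)
    (hfull : ∀ i, β i ≤ colorCount χ (Finset.univ : Finset V) i)
    (B : Finset V) :
    (FairIndep χ α β k B ∧
      ∀ B' : Finset V, FairIndep χ α β k B' → B ⊆ B' → B' = B) ↔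
    (B.card = k ∧ ∀ i, α i ≤ colorCount χ B i ∧ colorCount χ B i ≤ β i) := by
  constructor
  · rintro ⟨⟨hβ, hcard⟩, hmax⟩
    have hα : ∀ i, α i ≤ colorCount χ B i := by
      intro i
      by_contra h
      push_neg at h
      have hlt : colorCount χ B i < β i := lt_of_lt_of_le h (hαβ i)
      obtain ⟨v, hvB, hvi⟩ := exists_new_vertex χ (lt_of_lt_of_le hlt (hfull i))
      have hins : ∀ j, colorCount χ (insert v B) j
          = colorCount χ B j + (if j = i then 1 else 0) := by
        intro j
        rw [colorCount_insert χ hvB, hvi]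
        simp [eq_comm]
      have hindep : FairIndep χ α β k (insert v B) := by
        constructor
        · intro j
          rw [hins j]
          by_cases hj : j = i
          · subst hj; simpa using hlt
          · simp [hj, hβ j]
        · rw [Finset.card_insert_of_notMem hvB]
          have hsum : ∑ j, (α j - colorCount χ B j)
              = ∑ j, ((α j - colorCount χ (insert v B) j) + if j = i then 1 else 0) := by
            apply Finset.sum_congr rfl
            intro j _
            rw [hins j]
            by_cases hj : j = i
            · subst hj; simp; omega
            · simp [hj]
          have h1 : ∑ j : Fin c, (if j = i then 1 else 0 : ℕ) = 1 := by simp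
          rw [Finset.sum_add_distrib, h1] at hsum
          omega
      have := hmax _ hindep (Finset.subset_insert v B)
      exact hvB (Finset.insert_eq_self.1 this)
    have hzero : ∑ i, (α i - colorCount χ B i) = 0 := by
      apply Finset.sum_eq_zero
      intro i _
      have := hα i
      omega
    rw [hzero] at hcard
    refine ⟨?_, fun i => ⟨hα i, hβ i⟩⟩
    by_contra hne
    have hlt : B.card < k := by omega
    have : ∃ i, colorCount χ B i < β i := by
      by_contra h
      push_neg at h
      have : ∑ i, β i ≤ ∑ i, colorCount χ B i := Finset.sum_le_sum (fun i _ => h i)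
      rw [sum_colorCount] at this
      omega
    obtain ⟨i, hi⟩ := this
    obtain ⟨v, hvB, hvi⟩ := exists_new_vertex χ (lt_of_lt_of_le hi (hfull i))
    have hindep : FairIndep χ α β k (insert v B) := by
      constructor
      · intro j
        rw [colorCount_insert χ hvB, hvi]
        by_cases hj : j = i
        · subst hj; simpa using hi
        · rw [if_neg (fun h => hj h.symm)]; simpa using hβ j
      · rw [Finset.card_insert_of_notMem hvB]
        have : ∑ j, (α j - colorCount χ (insert v B) j) = 0 := by
          apply Finset.sum_eq_zero
          intro j _
          have := hα j
          have := colorCount_insert χ hvB j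
          omega
        omega
    have := hmax _ hindep (Finset.subset_insert v B)
    exact hvB (Finset.insert_eq_self.1 this)
  · rintro ⟨hcard, hb⟩
    have hzero : ∑ i, (α i - colorCount χ B i) = 0 :=
      Finset.sum_eq_zero (fun i _ => by have := (hb i).1; omega)
    refine ⟨⟨fun i => (hb i).2, by rw [hzero]; omega⟩, ?_⟩
    rintro B' ⟨_, hB'card⟩ hsub
    have : B'.card ≤ k := le_trans (Nat.le_add_right _ _) hB'card
    exact (Finset.eq_of_subset_of_card_le hsub (by omega)).symm
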